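/- Let B be a set, M = (B →₀ ℕ) the monoid of finitely supported ℕ-valued functions, and let C be any set. Suppose f assigns to each pair (P, R) of nonzero elements of M an element f(P, R) ∈ C such that: (i) f(P, R) = f(R, P) for all nonzero P, R; (ii) f(P + Q, R) = f(P, Q + R) for all nonzero P, Q, R. Then f(P, R) depends only on P + R: whenever P + R = P′ + R′ (with P, R, P′, R′ all nonzero), one has f(P, R) = f(P′, R′). -/
import Mathlib

private lemma key_12 {B C : Type*} (f : (B →₀ ℕ) → (B →₀ ℕ) → C)
    (hsymm : ∀ P R : B →₀ ℕ, P ≠ 0 → R ≠ 0 → f P R = f R P)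
    (hassoc : ∀ P Q R : B →₀ ℕ, P ≠ 0 → Q ≠ 0 → R ≠ 0 → f (P + Q) R = f P (Q + R)) :
    ∀ P R S : B →₀ ℕ, P ≠ 0 → R ≠ 0 → ∀ b : B, P b ≠ 0 →
      Finsupp.single b 1 + S = P + R → f P R = f (Finsupp.single b 1) S := by
  intro P R S hP hR b hb hS
  have hsb : (Finsupp.single b 1 : B →₀ ℕ) ≠ 0 := by simp
  have h1 : Finsupp.single b 1 ≤ P := by
    rw [Finsupp.single_le_iff]
    exact Nat.one_le_iff_ne_zero.mpr hb
  obtain ⟨Q, hQ⟩ := le_iff_exists_add.mp h1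
  by_cases hQ0 : Q = 0
  · subst hQ0
    rw [add_zero] at hQ
    subst hQ
    have : S = R := by
      have := hS
      exact add_left_cancel this
    rw [this]
  · have hSQ : S = Q + R := by
      apply add_left_cancel (a := Finsupp.single b 1)
      rw [hS, hQ, add_assoc]
    rw [hQ, hSQ]
    exact hassoc _ _ _ hsb hQ0 hR

/-- A symmetric "associative" function on pairs of nonzero elements of `B →₀ ℕ`
depends only on the sum of its arguments. -/
theorem stmt_12 {B C : Type*} (f : (B →₀ ℕ) → (B →₀ ℕ) → C)
    (hsymm : ∀ P R : B →₀ ℕ, P ≠ 0 → R ≠ 0 → f P R = f R P)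
    (hassoc : ∀ P Q R : B →₀ ℕ, P ≠ 0 → Q ≠ 0 → R ≠ 0 → f (P + Q) R = f P (Q + R)) :
    ∀ P R P' R' : B →₀ ℕ, P ≠ 0 → R ≠ 0 → P' ≠ 0 → R' ≠ 0 →
      P + R = P' + R' → f P R = f P' R' := by
  intro P R P' R' hP hR hP' hR' heq
  obtain ⟨b, hb⟩ := Finsupp.support_nonempty_iff.mpr hP
  have hb' : P b ≠ 0 := Finsupp.mem_support_iff.mp hb
  set S := P + R - Finsupp.single b 1 with hSdef
  have h1 : Finsupp.single b 1 ≤ P + R := by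
    rw [Finsupp.single_le_iff, Finsupp.add_apply]
    omega
  have hSsum : Finsupp.single b 1 + S = P + R := add_tsub_cancel_of_le h1
  have left : f P R = f (Finsupp.single b 1) S :=
    key_12 f hsymm hassoc P R S hP hR b hb' hSsum
  have hSsum' : Finsupp.single b 1 + S = P' + R' := by rw [hSsum, heq]
  have hcase : P' b ≠ 0 ∨ R' b ≠ 0 := by
    have : (P' + R') b ≠ 0 := by
      rw [← heq, Finsupp.add_apply]; omega
    rw [Finsupp.add_apply] at this
    omega
  have right : f P' R' = f (Finsupp.single b 1) S := by
    rcases hcase with h | h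
    · exact key_12 f hsymm hassoc P' R' S hP' hR' b h hSsum'
    · rw [hsymm P' R' hP' hR']
      exact key_12 f hsymm hassoc R' P' S hR' hP' b h (by rw [hSsum', add_comm])
  rw [left, right]
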